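/- (Partial integral equals partial trace.) Let n > 2 and m > 2, let Q₀ be a fixed rank-one orthogonal projection on ℂᵐ, and let μₘ be the normalized Haar probability measure on U(m). For every complex matrix M indexed by (Fin n × Fin m) × (Fin n × Fin m) and every rank-one orthogonal projection p on ℂⁿ, m·∫_{U(m)} tr( M·(p ⊗ₖ (V Q₀ Vᴴ)) ) dμₘ(V) = tr( (tr₂ M)·p ), where tr₂ M is the partial trace over the second factor, (tr₂ M) i j = Σ_k M (i,k) (j,k). -/

import Mathlib

open MeasureTheory Matrix Kronecker

noncomputable instance (k : Type*) [Fintype k] [DecidableEq k] :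
    MeasurableSpace (Matrix.unitaryGroup k ℂ) := borel _

instance (k : Type*) [Fintype k] [DecidableEq k] :
    BorelSpace (Matrix.unitaryGroup k ℂ) := ⟨rfl⟩

/-- `p` is a rank-one orthogonal projection. -/
def IsRankOneProj {k : Type*} [Fintype k] [DecidableEq k] (p : Matrix k k ℂ) : Prop :=
  p.IsHermitian ∧ p * p = p ∧ p.rank = 1

/-- Partial trace over the second factor. -/
noncomputable def ptrace2 {n m : ℕ} (M : Matrix (Fin n × Fin m) (Fin n × Fin m) ℂ) :
    Matrix (Fin n) (Fin n) ℂ :=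
  Matrix.of fun i j => ∑ k : Fin m, M (i, k) (j, k)

lemma trace_eq_one_of_isRankOneProj {k : Type*} [Fintype k] [DecidableEq k]
    (Q : Matrix k k ℂ) (h : IsRankOneProj Q) : Q.trace = 1 := by
  classical
  obtain ⟨hH, hI, hr⟩ := h
  set U : Matrix k k ℂ := (hH.eigenvectorUnitary : Matrix k k ℂ) with hU
  set D : Matrix k k ℂ := diagonal (RCLike.ofReal ∘ hH.eigenvalues) with hD
  have hsU : star U * U = 1 := hH.eigenvectorUnitary.2.1
  have hspec : Q = U * D * star U := hH.spectral_theorem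
  have hDD : D * D = D := by
    have h1 : U * (D * D) * star U = U * D * star U := by
      calc U * (D * D) * star U
          = (U * D * star U) * (U * D * star U) := by
            simp only [Matrix.mul_assoc]
            rw [← Matrix.mul_assoc (star U) U, hsU, Matrix.one_mul]
        _ = U * D * star U := by rw [← hspec, hI]
    calc D * D = (star U * U) * (D * D) * (star U * U) := by rw [hsU]; simp
      _ = star U * (U * (D * D) * star U) * U := by simp only [Matrix.mul_assoc]
      _ = star U * (U * D * star U) * U := by rw [h1]
      _ = (star U * U) * D * (star U * U) := by simp only [Matrix.mul_assoc]
      _ = D := by rw [hsU]; simp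
  have heig : ∀ i, hH.eigenvalues i = 0 ∨ hH.eigenvalues i = 1 := by
    intro i
    have h3 := congrFun (congrFun hDD i) i
    simp only [hD, Matrix.diagonal_mul_diagonal, Matrix.diagonal_apply_eq,
      Function.comp_apply] at h3
    rw [← RCLike.ofReal_mul, RCLike.ofReal_inj] at h3
    rcases mul_eq_zero.mp (by linear_combination h3 :
        hH.eigenvalues i * (hH.eigenvalues i - 1) = 0) with h | h
    · exact Or.inl h
    · exact Or.inr (by linarith)
  have hcard : Fintype.card {i // hH.eigenvalues i ≠ 0} = 1 := by
    rw [← hH.rank_eq_card_non_zero_eigs, hr]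
  have htr : Q.trace = D.trace := by
    rw [hspec, Matrix.trace_mul_cycle, hsU, Matrix.one_mul]
  rw [htr, hD, Matrix.trace_diagonal]
  have hterm : ∀ i, ((RCLike.ofReal ∘ hH.eigenvalues) i : ℂ)
      = if hH.eigenvalues i ≠ 0 then 1 else 0 := by
    intro i
    rcases heig i with h | h <;> simp [h]
  rw [Finset.sum_congr rfl fun i _ => hterm i, Finset.sum_boole,
    ← Fintype.card_subtype, hcard]
  norm_num

/-- Partial integral equals partial trace:
`m ∫ tr(M (p ⊗ₖ q_V)) dμₘ(V) = tr((tr₂ M) p)`. -/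
theorem partial_integral_eq_partial_trace (n m : ℕ) (hn : 2 < n) (hm : 2 < m)
    (Q₀ : Matrix (Fin m) (Fin m) ℂ) (hQ₀ : IsRankOneProj Q₀)
    (μm : Measure (Matrix.unitaryGroup (Fin m) ℂ))
    [IsProbabilityMeasure μm] [μm.IsMulLeftInvariant]
    (M : Matrix (Fin n × Fin m) (Fin n × Fin m) ℂ)
    (p : Matrix (Fin n) (Fin n) ℂ) (hp : IsRankOneProj p) :
    (m : ℂ) * ∫ V : Matrix.unitaryGroup (Fin m) ℂ,
        (M * (p ⊗ₖ (V.1 * Q₀ * (V.1)ᴴ))).trace ∂μm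
      = (ptrace2 M * p).trace := by
  classical
  set q : Matrix.unitaryGroup (Fin m) ℂ → Matrix (Fin m) (Fin m) ℂ :=
    fun V => V.1 * Q₀ * (V.1)ᴴ with hq
  -- continuity and integrability of entries
  have hqcont : Continuous q := by
    have hV : Continuous (fun V : Matrix.unitaryGroup (Fin m) ℂ => V.1) := continuous_subtype_val
    exact (hV.matrix_mul continuous_const).matrix_mul hV.matrix_conjTranspose
  have hint : ∀ a b, Integrable (fun V : Matrix.unitaryGroup (Fin m) ℂ => q V a b) μm := by
    intro a b
    refine ⟨((hqcont.matrix_elem a b)).aestronglyMeasurable, ?_⟩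
    refine HasFiniteIntegral.of_bounded (C := ∑ c, ∑ d, ‖Q₀ c d‖) (ae_of_all _ fun V => ?_)
    have h1 : q V a b = ∑ c, ∑ d, V.1 a c * Q₀ c d * star (V.1 b d) := by
      rw [Finset.sum_comm]
      simp [hq, Matrix.mul_apply, Matrix.conjTranspose_apply, Finset.sum_mul]
    rw [h1]
    refine (norm_sum_le _ _).trans (Finset.sum_le_sum fun c _ =>
      (norm_sum_le _ _).trans (Finset.sum_le_sum fun d _ => ?_))
    rw [norm_mul, norm_mul, norm_star]
    calc ‖V.1 a c‖ * ‖Q₀ c d‖ * ‖V.1 b d‖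
        ≤ 1 * ‖Q₀ c d‖ * 1 := by
          gcongr
          · exact entry_norm_bound_of_unitary V.2 a c
          · exact entry_norm_bound_of_unitary V.2 b d
      _ = ‖Q₀ c d‖ := by ring
  -- the averaged matrix
  set A : Matrix (Fin m) (Fin m) ℂ :=
    Matrix.of (fun a b => ∫ V : Matrix.unitaryGroup (Fin m) ℂ, q V a b ∂μm) with hA
  have hAapp : ∀ a b, A a b = ∫ V : Matrix.unitaryGroup (Fin m) ℂ, q V a b ∂μm :=
    fun a b => rfl
  -- invariance: W * A * Wᴴ = A
  have hinv : ∀ W : Matrix.unitaryGroup (Fin m) ℂ, W.1 * A * (W.1)ᴴ = A := by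
    intro W
    ext a b
    have expand : ∀ B : Matrix (Fin m) (Fin m) ℂ,
        (W.1 * B * (W.1)ᴴ) a b = ∑ d, ∑ c, (W.1 a c * star (W.1 b d)) * B c d := by
      intro B
      simp only [Matrix.mul_apply, Matrix.conjTranspose_apply, Finset.sum_mul]
      exact Finset.sum_congr rfl fun d _ => Finset.sum_congr rfl fun c _ => by ring
    calc (W.1 * A * (W.1)ᴴ) a b
        = ∑ d, ∑ c, (W.1 a c * star (W.1 b d)) *
            ∫ V : Matrix.unitaryGroup (Fin m) ℂ, q V c d ∂μm := expand A
      _ = ∑ d, ∑ c, ∫ V : Matrix.unitaryGroup (Fin m) ℂ,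
            (W.1 a c * star (W.1 b d)) * q V c d ∂μm :=
          Finset.sum_congr rfl fun d _ => Finset.sum_congr rfl fun c _ =>
            (integral_const_mul _ _).symm
      _ = ∑ d, ∫ V : Matrix.unitaryGroup (Fin m) ℂ,
            ∑ c, (W.1 a c * star (W.1 b d)) * q V c d ∂μm :=
          Finset.sum_congr rfl fun d _ =>
            (integral_finset_sum _ fun c _ => (hint c d).const_mul _).symm
      _ = ∫ V : Matrix.unitaryGroup (Fin m) ℂ,
            ∑ d, ∑ c, (W.1 a c * star (W.1 b d)) * q V c d ∂μm :=
          (integral_finset_sum _ fun d _ => integrable_finset_sum _ fun c _ =>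
            (hint c d).const_mul _).symm
      _ = ∫ V : Matrix.unitaryGroup (Fin m) ℂ, q (W * V) a b ∂μm := by
          refine integral_congr_ae (ae_of_all _ fun V => ?_)
          show ∑ d, ∑ c, (W.1 a c * star (W.1 b d)) * q V c d = q (W * V) a b
          rw [← expand (q V)]
          have hWV : q (W * V) = W.1 * q V * (W.1)ᴴ := by
            simp only [hq, Submonoid.coe_mul, Matrix.conjTranspose_mul, Matrix.mul_assoc]
          rw [hWV]
      _ = A a b := integral_mul_left_eq_self (fun V : Matrix.unitaryGroup (Fin m) ℂ => q V a b) W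
  -- commutation
  have hcomm : ∀ W : Matrix.unitaryGroup (Fin m) ℂ, W.1 * A = A * W.1 := by
    intro W
    have h1 : (W.1)ᴴ * W.1 = 1 := by
      have := W.2.1
      rwa [Matrix.star_eq_conjTranspose] at this
    calc W.1 * A = W.1 * A * ((W.1)ᴴ * W.1) := by rw [h1, Matrix.mul_one]
      _ = (W.1 * A * (W.1)ᴴ) * W.1 := by simp only [Matrix.mul_assoc]
      _ = A * W.1 := by rw [hinv W]
  -- off-diagonal entries vanish
  have hoff : ∀ a b, a ≠ b → A a b = 0 := by
    intro a b hab
    set d : Fin m → ℂ := fun j => if j = a then -1 else 1 with hd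
    have hDmem : diagonal d ∈ Matrix.unitaryGroup (Fin m) ℂ := by
      rw [Matrix.mem_unitaryGroup_iff, Matrix.star_eq_conjTranspose,
        Matrix.diagonal_conjTranspose, Matrix.diagonal_mul_diagonal]
      have hds : (fun i => d i * star (d i)) = fun _ => (1 : ℂ) := by
        funext j
        by_cases hj : j = a <;> simp [hd, hj]
      rw [show (fun i => d i * star d i) = fun _ => (1 : ℂ) from hds, Matrix.diagonal_one]
    have h1 := congrFun (congrFun (hcomm ⟨diagonal d, hDmem⟩) a) b
    simp only [Matrix.diagonal_mul, Matrix.mul_diagonal] at h1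
    simp only [hd, if_pos rfl, if_neg (Ne.symm hab)] at h1
    have h2 : (2 : ℂ) * A a b = 0 := by linear_combination -h1
    exact (mul_eq_zero.mp h2).resolve_left two_ne_zero
  -- diagonal entries all equal
  have hdiag : ∀ a b, A a a = A b b := by
    intro a b
    rcases eq_or_ne a b with h | hab
    · rw [h]
    set σ : Equiv.Perm (Fin m) := Equiv.swap a b with hσ
    set P : Matrix (Fin m) (Fin m) ℂ := σ.permMatrix ℂ with hP
    have hPstar : star P = (σ⁻¹).permMatrix ℂ := by
      rw [hP, Matrix.star_eq_conjTranspose]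
      ext i j : 2
      simp only [Matrix.conjTranspose_apply, PEquiv.toMatrix_apply, Equiv.toPEquiv_apply,
        Option.mem_def, Option.some.injEq]
      by_cases h : σ j = i
      · have h2 : σ⁻¹ i = j := by rw [← h]; exact σ.symm_apply_apply j
        simp [h, h2]
      · have h2 : ¬(σ⁻¹ i = j) := fun hc => h (by rw [← hc]; exact σ.apply_symm_apply i)
        simp [h, show ¬ σ.symm i = j from h2]
    have hPmem : P ∈ Matrix.unitaryGroup (Fin m) ℂ := by
      rw [Matrix.mem_unitaryGroup_iff, hPstar, hP]
      rw [← PEquiv.toMatrix_trans, ← Equiv.toPEquiv_trans]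
      have : σ.trans σ⁻¹ = Equiv.refl (Fin m) := by
        ext x; simp
      rw [this, Equiv.toPEquiv_refl, PEquiv.toMatrix_refl]
    have h1 := congrFun (congrFun (hcomm ⟨P, hPmem⟩) a) b
    have hl : (P * A) a b = A b b := by
      rw [hP, Equiv.Perm.permMatrix, PEquiv.toMatrix_toPEquiv_mul]
      simp [hσ, Matrix.submatrix_apply]
    have hr : (A * P) a b = A a a := by
      rw [hP, Equiv.Perm.permMatrix, PEquiv.mul_toMatrix_toPEquiv]
      simp [hσ, Matrix.submatrix_apply]
    rw [hl, hr] at h1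
    exact h1.symm
  -- trace of A is 1
  have htrA : A.trace = 1 := by
    have h1 : A.trace = ∫ V : Matrix.unitaryGroup (Fin m) ℂ, (q V).trace ∂μm := by
      calc A.trace = ∑ a, ∫ V : Matrix.unitaryGroup (Fin m) ℂ, q V a a ∂μm := rfl
        _ = ∫ V : Matrix.unitaryGroup (Fin m) ℂ, ∑ a, q V a a ∂μm :=
            (integral_finset_sum _ fun a _ => hint a a).symm
        _ = ∫ V : Matrix.unitaryGroup (Fin m) ℂ, (q V).trace ∂μm := rfl
    have h2 : ∀ V : Matrix.unitaryGroup (Fin m) ℂ, (q V).trace = 1 := by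
      intro V
      have hV1 : (V.1)ᴴ * V.1 = 1 := by
        have := V.2.1
        rwa [Matrix.star_eq_conjTranspose] at this
      rw [hq]
      simp only
      rw [Matrix.trace_mul_cycle, hV1, Matrix.one_mul]
      exact trace_eq_one_of_isRankOneProj Q₀ hQ₀
    rw [h1, integral_congr_ae (ae_of_all _ h2), integral_const]
    simp
  -- value of diagonal entries
  have hm0 : (m : ℂ) ≠ 0 := Nat.cast_ne_zero.mpr (by omega)
  have hdval : ∀ a, A a a = (m : ℂ)⁻¹ := by
    intro a
    have h1 : A.trace = (m : ℂ) * A a a := by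
      calc A.trace = ∑ _b : Fin m, A a a := Finset.sum_congr rfl fun b _ => hdiag b a
        _ = (m : ℂ) * A a a := by
            rw [Finset.sum_const, Finset.card_univ, Fintype.card_fin, nsmul_eq_mul]
    rw [htrA] at h1
    field_simp
    linear_combination -h1
  have hAval : ∀ a b, A a b = if a = b then (m : ℂ)⁻¹ else 0 := by
    intro a b
    rcases eq_or_ne a b with h | h
    · rw [h, if_pos rfl]; exact hdval b
    · rw [if_neg h]; exact hoff a b h
  -- main computation
  have hmain : (∫ V : Matrix.unitaryGroup (Fin m) ℂ,
      (M * (p ⊗ₖ q V)).trace ∂μm)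
      = ∑ x : Fin n × Fin m, ∑ y : Fin n × Fin m,
          (M x y * p y.1 x.1) * A y.2 x.2 := by
    have hexp : ∀ V : Matrix.unitaryGroup (Fin m) ℂ,
        (M * (p ⊗ₖ q V)).trace
          = ∑ x : Fin n × Fin m, ∑ y : Fin n × Fin m,
              (M x y * p y.1 x.1) * q V y.2 x.2 := by
      intro V
      rw [Matrix.trace]
      simp only [Matrix.diag, Matrix.mul_apply, Matrix.kroneckerMap_apply]
      exact Finset.sum_congr rfl fun x _ => Finset.sum_congr rfl fun y _ => by ring
    rw [integral_congr_ae (ae_of_all _ hexp)]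
    rw [integral_finset_sum _ fun x _ => integrable_finset_sum _ fun y _ =>
      (hint y.2 x.2).const_mul _]
    refine Finset.sum_congr rfl fun x _ => ?_
    rw [integral_finset_sum _ fun y _ => (hint y.2 x.2).const_mul _]
    exact Finset.sum_congr rfl fun y _ => integral_const_mul _ _
  rw [hmain]
  -- finish
  have hRHS : (ptrace2 M * p).trace
      = ∑ i : Fin n, ∑ j : Fin n, ∑ k : Fin m, M (i, k) (j, k) * p j i := by
    rw [Matrix.trace]
    simp only [Matrix.diag, Matrix.mul_apply, ptrace2, Matrix.of_apply, Finset.sum_mul]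
  rw [hRHS]
  have hL : ∀ x : Fin n × Fin m, (∑ y : Fin n × Fin m, (M x y * p y.1 x.1) * A y.2 x.2)
      = (∑ j : Fin n, M x (j, x.2) * p j x.1) * (m : ℂ)⁻¹ := by
    intro x
    rw [Fintype.sum_prod_type]
    simp only [hAval, mul_ite, mul_zero]
    simp only [Finset.sum_ite_eq', Finset.mem_univ, if_true]
    rw [Finset.sum_mul]
  rw [Finset.sum_congr rfl fun x _ => hL x]
  calc (m : ℂ) * ∑ x : Fin n × Fin m, (∑ j, M x (j, x.2) * p j x.1) * (m : ℂ)⁻¹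
      = ∑ x : Fin n × Fin m, ∑ j, M x (j, x.2) * p j x.1 := by
        rw [Finset.mul_sum]
        refine Finset.sum_congr rfl fun x _ => ?_
        rw [mul_comm ((m : ℂ)) _, mul_assoc, inv_mul_cancel₀ hm0, mul_one]
    _ = ∑ i, ∑ k, ∑ j, M (i, k) (j, k) * p j i := by rw [Fintype.sum_prod_type]
    _ = ∑ i, ∑ j, ∑ k, M (i, k) (j, k) * p j i :=
        Finset.sum_congr rfl fun i _ => Finset.sum_comm
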